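/- Let S be any subset of Spec R. Then the subcategory NF⁻¹(S) = {M finitely generated : NF(M) ⊆ S} is a resolving subcategory of finitely generated R-modules and is closed under the Auslander transpose Tr; in particular it is closed under cosyzygies Ω⁻¹. -/

import Mathlib

open CategoryTheory

noncomputable section

namespace Paper

variable (R : Type) [CommRing R]

/-- finitely generated projective module (object of `add R`) -/
def FGProj (M : ModuleCat.{0} R) : Prop := Module.Finite R M ∧ Module.Projective R M

/-- a short exact sequence `0 → L → M → N → 0` -/
def SES {L M N : ModuleCat.{0} R} (f : L →ₗ[R] M) (g : M →ₗ[R] N) : Prop :=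
  Function.Injective f ∧ Function.Surjective g ∧ LinearMap.ker g = LinearMap.range f

/-- `N` is a first syzygy of `M`: kernel of a surjection from a f.g. projective onto `M`. -/
def IsSyzygy (N M : ModuleCat.{0} R) : Prop :=
  ∃ (P : ModuleCat.{0} R) (f : P →ₗ[R] M), FGProj R P ∧ Function.Surjective f ∧
    Nonempty (N ≃ₗ[R] LinearMap.ker f)

/-- `N` is an `n`-th syzygy of `M` -/
def IsNthSyzygy : ℕ → ModuleCat.{0} R → ModuleCat.{0} R → Prop
  | 0, N, M => Nonempty (N ≃ₗ[R] M)
  | (n+1), N, M => ∃ K : ModuleCat.{0} R, IsNthSyzygy n K M ∧ IsSyzygy R N K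

/-- `f : M → P` is a left `add R`-approximation -/
def IsLeftApprox {M P : ModuleCat.{0} R} (f : M →ₗ[R] P) : Prop :=
  FGProj R P ∧ ∀ (Q : ModuleCat.{0} R), FGProj R Q → ∀ g : M →ₗ[R] Q,
    ∃ h : P →ₗ[R] Q, h.comp f = g

/-- `N` is a first cosyzygy of `M`: cokernel of a left `add R`-approximation. -/
def IsCosyzygy (N M : ModuleCat.{0} R) : Prop :=
  ∃ (P : ModuleCat.{0} R) (f : M →ₗ[R] P), IsLeftApprox R f ∧
    Nonempty (N ≃ₗ[R] (P ⧸ LinearMap.range f))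

/-- `N` is an `n`-th cosyzygy of `M` -/
def IsNthCosyzygy : ℕ → ModuleCat.{0} R → ModuleCat.{0} R → Prop
  | 0, N, M => Nonempty (N ≃ₗ[R] M)
  | (n+1), N, M => ∃ K : ModuleCat.{0} R, IsNthCosyzygy n K M ∧ IsCosyzygy R N K

/-- `T` is an (Auslander) transpose of `M` -/
def IsTranspose (T M : ModuleCat.{0} R) : Prop :=
  ∃ (P₁ P₀ : ModuleCat.{0} R) (d : P₁ →ₗ[R] P₀) (p : P₀ →ₗ[R] M),
    FGProj R P₁ ∧ FGProj R P₀ ∧ Function.Surjective p ∧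
    LinearMap.ker p = LinearMap.range d ∧
    Nonempty (T ≃ₗ[R] ((Module.Dual R P₁) ⧸ LinearMap.range d.dualMap))

/-- stably isomorphic: `M ⊕ P ≅ N ⊕ Q` with `P`, `Q` f.g. projective -/
def StablyIso (M N : ModuleCat.{0} R) : Prop :=
  ∃ P Q : ModuleCat.{0} R, FGProj R P ∧ FGProj R Q ∧
    Nonempty ((M × P) ≃ₗ[R] (N × Q))

/-- resolving subcategory of `mod R` -/
structure Resolving (X : ModuleCat.{0} R → Prop) : Prop where
  fg : ∀ M, X M → Module.Finite R M
  proj : ∀ M : ModuleCat.{0} R, FGProj R M → X M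
  summand : ∀ M N N' : ModuleCat.{0} R, X M → Nonempty (M ≃ₗ[R] N × N') → X N
  extension : ∀ (L M N : ModuleCat.{0} R) (f : L →ₗ[R] M) (g : M →ₗ[R] N),
      SES R f g → X L → X N → X M
  ker_epi : ∀ (L M N : ModuleCat.{0} R) (f : L →ₗ[R] M) (g : M →ₗ[R] N),
      SES R f g → X M → X N → X L

/-- `Ext^i_R(M, N) = 0` -/
def ExtVanish (M N : ModuleCat.{0} R) (i : ℕ) : Prop :=
  Subsingleton (((Ext R (ModuleCat.{0} R) i).obj (Opposite.op M)).obj N)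

/-- totally reflexive (Gorenstein dimension zero) module -/
def TotallyReflexive (M : ModuleCat.{0} R) : Prop :=
  Function.Bijective (Module.Dual.eval R M) ∧
  ∀ i : ℕ, 0 < i → ExtVanish R M (ModuleCat.of R R) i ∧
    ExtVanish R (ModuleCat.of R (Module.Dual R M)) (ModuleCat.of R R) i

/-- `M` has finite projective dimension -/
def FiniteProjDim (M : ModuleCat.{0} R) : Prop :=
  ∃ (n : ℕ) (N : ModuleCat.{0} R), IsNthSyzygy R n N M ∧ FGProj R N

/-- additive closure of a family of modules -/
def AddClosure (S : ModuleCat.{0} R → Prop) (M : ModuleCat.{0} R) : Prop :=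
  ∃ (k : ℕ) (f : Fin k → ModuleCat.{0} R) (N : ModuleCat.{0} R),
    (∀ i, S (f i)) ∧ Nonempty ((M × N) ≃ₗ[R] ((i : Fin k) → f i))

/-- the operation `[−]`: `add` closure of `R` and all syzygies of modules of `Y` -/
def Bracket (Y : ModuleCat.{0} R → Prop) : ModuleCat.{0} R → Prop :=
  AddClosure R (fun N => FGProj R N ∨ ∃ (M : ModuleCat.{0} R) (i : ℕ), Y M ∧ IsNthSyzygy R i N M)

/-- `Y ∘ Z`: extensions of a module of `Z` by a module of `Y` -/
def ExtOf (Y Z : ModuleCat.{0} R → Prop) (M : ModuleCat.{0} R) : Prop :=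
  ∃ (A B : ModuleCat.{0} R) (f : A →ₗ[R] M) (g : M →ₗ[R] B), Y A ∧ Z B ∧ SES R f g

/-- the ball `[C]_n` of radius `n` centered at `C` -/
def Ball (C : ModuleCat.{0} R) : ℕ → ModuleCat.{0} R → Prop
  | 0 => fun _ => False
  | 1 => Bracket R (fun M => Nonempty (M ≃ₗ[R] C))
  | (n+2) => Bracket R (ExtOf R (Ball C (n+1)) (Bracket R (fun M => Nonempty (M ≃ₗ[R] C))))

/-- `X` has finite radius: `X ⊆ [C]_{n+1}` for some `C ∈ X`. -/
def FiniteRadius (X : ModuleCat.{0} R → Prop) : Prop :=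
  ∃ (C : ModuleCat.{0} R) (n : ℕ), X C ∧ ∀ M, X M → Ball R C (n + 1) M

/-- `depth_A M ≥ n`: there is a weakly `M`-regular sequence of length `n` in the maximal ideal -/
def DepthGE (A : Type) [CommRing A] [IsLocalRing A]
    (M : Type) [AddCommGroup M] [Module A M] (n : ℕ) : Prop :=
  ∃ rs : List A, rs.length = n ∧ (∀ x ∈ rs, x ∈ IsLocalRing.maximalIdeal A) ∧
    RingTheory.Sequence.IsWeaklyRegular M rs

/-- `M` is free at the prime `p` -/
def FreeAt (M : ModuleCat.{0} R) (p : PrimeSpectrum R) : Prop :=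
  Module.Free (Localization.AtPrime p.asIdeal) (LocalizedModule p.asIdeal.primeCompl M)

/-- locally free on the punctured spectrum of a local ring -/
def LocFreeOnPunctured [IsLocalRing R] (M : ModuleCat.{0} R) : Prop :=
  ∀ p : PrimeSpectrum R, p.asIdeal ≠ IsLocalRing.maximalIdeal R → FreeAt R M p

/-- a Gorenstein local ring: `R` has finite injective dimension over itself -/
def Gorenstein : Prop :=
  ∃ n : ℕ, ∀ i : ℕ, n < i → ∀ M : ModuleCat.{0} R, ExtVanish R M (ModuleCat.of R R) i

/-- the annihilator of the `i`-th local cohomology module `H^i_I(M)` -/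
def aa (I : Ideal R) (i : ℕ) (M : ModuleCat.{0} R) : Ideal R :=
  Module.annihilator R ((localCohomology I i).obj M)

/-- an Ulrich module over a CM local ring of dimension `d` -/
def Ulrich [IsLocalRing R] (d : ℕ) (U : ModuleCat.{0} R) : Prop :=
  Module.Finite R U ∧ DepthGE R U d ∧ ¬ Subsingleton U ∧
  ∃ xs : List R, xs.length = d ∧ (∀ x ∈ xs, x ∈ IsLocalRing.maximalIdeal R) ∧
    RingTheory.Sequence.IsWeaklyRegular U xs ∧
    (IsLocalRing.maximalIdeal R) • (⊤ : Submodule R U) = Ideal.ofList xs • ⊤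

end Paper

open Paper

/-- the subcategory `NF⁻¹(S)` of modules whose nonfree locus is contained in `S` -/
def NFinv (R : Type) [CommRing R] (S : Set (PrimeSpectrum R))
    (M : ModuleCat.{0} R) : Prop :=
  Module.Finite R M ∧ ∀ p : PrimeSpectrum R, p ∉ S → FreeAt R M p


section NFAux


theorem aux_locMap_comp {R : Type} [CommRing R] (S : Submonoid R) {M N P : Type}
    [AddCommGroup M] [Module R M] [AddCommGroup N] [Module R N] [AddCommGroup P] [Module R P]
    (f : M →ₗ[R] N) (g : N →ₗ[R] P) :
    LocalizedModule.map S (g ∘ₗ f) = (LocalizedModule.map S g) ∘ₗ (LocalizedModule.map S f) := by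
  ext x
  refine LocalizedModule.induction_on (fun m s => ?_) x
  simp

abbrev auxL {R : Type} [CommRing R] (S : Submonoid R) (M : Type) [AddCommGroup M] [Module R M] :
    (M →ₗ[R] R) →ₗ[R] (LocalizedModule S M →ₗ[Localization S] Localization S) :=
  IsLocalizedModule.mapExtendScalars S (LocalizedModule.mkLinearMap S M)
    (Algebra.linearMap R (Localization S)) (Localization S)

theorem aux_hom_comp {R : Type} [CommRing R] (S : Submonoid R) {M N : Type}
    [AddCommGroup M] [Module R M] [AddCommGroup N] [Module R N]
    (f : N →ₗ[R] M) (g : M →ₗ[R] R) :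
    auxL S N (g ∘ₗ f) = (auxL S M g) ∘ₗ (LocalizedModule.map S f) := by
  ext x
  refine LocalizedModule.induction_on (fun m s => ?_) x
  simp [IsLocalizedModule.mk_eq_mk', LocalizedModule.map, IsLocalizedModule.map_mk']

theorem aux_free_of_fin_proj (A : Type) [CommRing A] [IsLocalRing A] (M : Type)
    [AddCommGroup M] [Module A M] (h1 : Module.Finite A M) (h2 : Module.Projective A M) :
    Module.Free A M := by
  have := Module.finitePresentation_of_projective A M
  exact Module.free_of_flat_of_isLocalRing

theorem aux_free_of_retract {A : Type} [CommRing A] [IsLocalRing A] {X Y : Type}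
    [AddCommGroup X] [Module A X] [AddCommGroup Y] [Module A Y]
    (hfin : Module.Finite A Y) (hproj : Module.Projective A Y)
    (i : X →ₗ[A] Y) (r : Y →ₗ[A] X) (h : r ∘ₗ i = LinearMap.id) : Module.Free A X := by
  have hX : Module.Projective A X := Module.Projective.of_split i r h
  have hfX : Module.Finite A X := Module.Finite.of_surjective r
    (fun x => ⟨i x, by simpa using LinearMap.congr_fun h x⟩)
  exact aux_free_of_fin_proj A X hfX hX

theorem aux_coker_retract {A : Type} [CommRing A] {E F : Type} [AddCommGroup E] [Module A E]
    [AddCommGroup F] [Module A F] (u : E →ₗ[A] F) (t : F →ₗ[A] E)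
    (h : u ∘ₗ (t ∘ₗ u) = u) :
    ∃ (i : (F ⧸ LinearMap.range u) →ₗ[A] F) (r : F →ₗ[A] (F ⧸ LinearMap.range u)),
      r ∘ₗ i = LinearMap.id := by
  have hker : LinearMap.range u ≤ LinearMap.ker (LinearMap.id - u ∘ₗ t) := by
    rintro x ⟨y, rfl⟩
    have := LinearMap.congr_fun h y
    simp only [LinearMap.comp_apply] at this
    simp [LinearMap.sub_apply, this, sub_eq_zero]
  refine ⟨(LinearMap.range u).liftQ (LinearMap.id - u ∘ₗ t) hker, (LinearMap.range u).mkQ, ?_⟩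
  apply LinearMap.ext
  intro x
  obtain ⟨y, rfl⟩ := (LinearMap.range u).mkQ_surjective x
  simp only [LinearMap.comp_apply, Submodule.mkQ_apply, Submodule.liftQ_apply,
    LinearMap.sub_apply, LinearMap.id_apply, map_sub]
  have : Submodule.Quotient.mk (p := LinearMap.range u) (u (t y)) = 0 :=
    (Submodule.Quotient.mk_eq_zero _).mpr ⟨t y, rfl⟩
  rw [this, sub_zero]

set_option maxHeartbeats 1000000 in
theorem aux_transpose_free {R : Type} [CommRing R] (p : PrimeSpectrum R)
    {P₁ P₀ M : Type} [AddCommGroup P₁] [Module R P₁] [AddCommGroup P₀] [Module R P₀]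
    [AddCommGroup M] [Module R M]
    [Module.Finite R P₁] [Module.Projective R P₁] [Module.Finite R P₀] [Module.Projective R P₀]
    (d : P₁ →ₗ[R] P₀) (pr : P₀ →ₗ[R] M) (hsurj : Function.Surjective pr)
    (hker : LinearMap.ker pr = LinearMap.range d)
    (hM : Module.Free (Localization.AtPrime p.asIdeal) (LocalizedModule p.asIdeal.primeCompl M)) :
    Module.Free (Localization.AtPrime p.asIdeal)
      (LocalizedModule p.asIdeal.primeCompl
        (Module.Dual R P₁ ⧸ LinearMap.range d.dualMap)) := by
  have hfp1 : Module.FinitePresentation R P₁ := Module.finitePresentation_of_projective R P₁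
  have hfp0 : Module.FinitePresentation R P₀ := Module.finitePresentation_of_projective R P₀
  set S := p.asIdeal.primeCompl with hS
  let A := Localization.AtPrime p.asIdeal
  let dp : LocalizedModule S P₁ →ₗ[A] LocalizedModule S P₀ := LocalizedModule.map S d
  let prp : LocalizedModule S P₀ →ₗ[A] LocalizedModule S M := LocalizedModule.map S pr
  have hexp : Function.Exact dp prp :=
    LocalizedModule.map_exact S d pr (LinearMap.exact_iff.mpr hker)
  have hsp : Function.Surjective prp := LocalizedModule.map_surjective S pr hsurj
  letI := hM
  obtain ⟨u₀, hu₀⟩ := Module.projective_lifting_property prp LinearMap.id hsp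
  set π : LocalizedModule S P₀ →ₗ[A] LocalizedModule S P₀ := LinearMap.id - u₀ ∘ₗ prp with hπ
  have hπmem : ∀ x, π x ∈ LinearMap.range dp := by
    intro x
    refine (hexp _).mp ?_
    have h1 : prp (u₀ (prp x)) = prp x := LinearMap.congr_fun hu₀ (prp x)
    simp [hπ, h1]
  have hproj0 : Module.Projective A (LocalizedModule S P₀) :=
    Module.projective_of_isLocalizedModule S (LocalizedModule.mkLinearMap S P₀)
  obtain ⟨v, hv⟩ := Module.projective_lifting_property dp.rangeRestrict
    (π.codRestrict (LinearMap.range dp) hπmem) dp.surjective_rangeRestrict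
  have hdv : dp ∘ₗ v = π := by
    have := congrArg (fun w => (LinearMap.range dp).subtype ∘ₗ w) hv
    simpa [LinearMap.comp_assoc, LinearMap.subtype_comp_codRestrict] using this
  have hπd : π ∘ₗ dp = dp := by
    ext x
    have h0 : prp (dp x) = 0 := hexp.apply_apply_eq_zero x
    simp [hπ, h0]
  have hdvd : dp ∘ₗ (v ∘ₗ dp) = dp := by
    rw [← LinearMap.comp_assoc, hdv, hπd]
  -- the localized transpose map
  let u : (LocalizedModule S P₀ →ₗ[A] A) →ₗ[R] (LocalizedModule S P₁ →ₗ[A] A) :=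
    IsLocalizedModule.map S (auxL S P₀) (auxL S P₁) d.dualMap
  have hu_eq : ∀ φ, u φ = φ ∘ₗ dp := by
    intro φ
    obtain ⟨⟨g, s⟩, hgs⟩ := IsLocalizedModule.surj S (auxL S P₀) φ
    have hd : d.dualMap g = g ∘ₗ d := rfl
    have h1 : u (s • φ) = (auxL S P₀ g) ∘ₗ dp := by
      rw [hgs, IsLocalizedModule.map_apply, hd, aux_hom_comp]
    rw [← hgs, Submonoid.smul_def, map_smul] at h1
    have hs : IsUnit (algebraMap R A (s : R)) := IsLocalization.map_units A s
    ext x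
    have h4 := LinearMap.congr_fun h1 x
    simp only [LinearMap.smul_apply, LinearMap.comp_apply] at h4
    rw [Algebra.smul_def, Algebra.smul_def] at h4
    exact hs.mul_left_cancel h4
  let uA : (LocalizedModule S P₀ →ₗ[A] A) →ₗ[A] (LocalizedModule S P₁ →ₗ[A] A) :=
    u.extendScalarsOfIsLocalization S A
  have huA : ∀ φ, uA φ = φ ∘ₗ dp := fun φ => hu_eq φ
  let t : (LocalizedModule S P₁ →ₗ[A] A) →ₗ[A] (LocalizedModule S P₀ →ₗ[A] A) :=
    LinearMap.lcomp A A v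
  have hreg : uA ∘ₗ (t ∘ₗ uA) = uA := by
    apply LinearMap.ext; intro φ
    have e1 : uA φ = φ ∘ₗ dp := huA φ
    have e2 : t (φ ∘ₗ dp) = (φ ∘ₗ dp) ∘ₗ v := LinearMap.lcomp_apply' _ _
    have e3 : uA ((φ ∘ₗ dp) ∘ₗ v) = ((φ ∘ₗ dp) ∘ₗ v) ∘ₗ dp := huA _
    simp only [LinearMap.comp_apply, e1, e2, e3]
    apply LinearMap.ext; intro x
    simp only [LinearMap.comp_apply]
    exact congrArg φ (LinearMap.congr_fun hdvd x)
  obtain ⟨i, r, hir⟩ := aux_coker_retract uA t hreg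
  have hfinF : Module.Finite A (LocalizedModule S P₁ →ₗ[A] A) :=
    Module.Finite.of_isLocalizedModule S (auxL S P₁)
  have hprojF : Module.Projective A (LocalizedModule S P₁ →ₗ[A] A) :=
    Module.projective_of_isLocalizedModule S (auxL S P₁)
  have hfreeC : Module.Free A ((LocalizedModule S P₁ →ₗ[A] A) ⧸ LinearMap.range uA) :=
    aux_free_of_retract hfinF hprojF i r hir
  -- identify the cokernel with the localized quotient
  let T' := Module.Dual R P₁ ⧸ LinearMap.range d.dualMap
  let q : Module.Dual R P₁ →ₗ[R] T' := (LinearMap.range d.dualMap).mkQ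
  have hexq : Function.Exact d.dualMap q :=
    LinearMap.exact_iff.mpr (Submodule.ker_mkQ _)
  let Q : (LocalizedModule S P₁ →ₗ[A] A) →ₗ[R] LocalizedModule S T' :=
    IsLocalizedModule.map S (auxL S P₁) (LocalizedModule.mkLinearMap S T') q
  have hexQ : Function.Exact u Q :=
    IsLocalizedModule.map_exact S (auxL S P₀) (auxL S P₁) (LocalizedModule.mkLinearMap S T')
      d.dualMap q hexq
  have hQs : Function.Surjective Q :=
    IsLocalizedModule.map_surjective S (auxL S P₁) (LocalizedModule.mkLinearMap S T') q
      (Submodule.mkQ_surjective _)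
  let QA : (LocalizedModule S P₁ →ₗ[A] A) →ₗ[A] LocalizedModule S T' :=
    Q.extendScalarsOfIsLocalization S A
  have hkerQ : LinearMap.ker QA = LinearMap.range uA := by
    ext x
    constructor
    · intro hx
      obtain ⟨y, hy⟩ := (hexQ x).mp hx
      exact ⟨y, hy⟩
    · rintro ⟨y, rfl⟩
      exact (hexQ _).mpr ⟨y, rfl⟩
  have e2 : ((LocalizedModule S P₁ →ₗ[A] A) ⧸ LinearMap.range uA) ≃ₗ[A] LocalizedModule S T' :=
    (Submodule.quotEquivOfEq _ _ hkerQ.symm).trans (QA.quotKerEquivOfSurjective hQs)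
  letI := hfreeC
  exact Module.Free.of_equiv e2

theorem aux_freeAt_congr {R : Type} [CommRing R] (S : Submonoid R) {M N : Type}
    [AddCommGroup M] [Module R M] [AddCommGroup N] [Module R N] (e : M ≃ₗ[R] N)
    (h : Module.Free (Localization S) (LocalizedModule S M)) :
    Module.Free (Localization S) (LocalizedModule S N) := by
  have h1 : (LocalizedModule.map S e.toLinearMap) ∘ₗ (LocalizedModule.map S e.symm.toLinearMap)
      = LinearMap.id := by
    rw [← aux_locMap_comp]
    have : e.toLinearMap ∘ₗ e.symm.toLinearMap = LinearMap.id := by ext x; simp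
    rw [this, LocalizedModule.map_id]
  have h2 : (LocalizedModule.map S e.symm.toLinearMap) ∘ₗ (LocalizedModule.map S e.toLinearMap)
      = LinearMap.id := by
    rw [← aux_locMap_comp]
    have : e.symm.toLinearMap ∘ₗ e.toLinearMap = LinearMap.id := by ext x; simp
    rw [this, LocalizedModule.map_id]
  exact h.of_equiv (LinearEquiv.ofLinear (LocalizedModule.map S e.toLinearMap)
    (LocalizedModule.map S e.symm.toLinearMap) h1 h2)

section Prime

variable {R : Type} [CommRing R] (p : PrimeSpectrum R) {L M N : Type}
    [AddCommGroup L] [Module R L] [AddCommGroup M] [Module R M] [AddCommGroup N] [Module R N]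

theorem aux_split
    (f : L →ₗ[R] M) (g : M →ₗ[R] N) (hinj : Function.Injective f) (hsurj : Function.Surjective g)
    (hker : LinearMap.ker g = LinearMap.range f)
    (hN : Module.Free (Localization.AtPrime p.asIdeal) (LocalizedModule p.asIdeal.primeCompl N)) :
    ∃ e : (LocalizedModule p.asIdeal.primeCompl M) ≃ₗ[Localization.AtPrime p.asIdeal]
      (LocalizedModule p.asIdeal.primeCompl L) × (LocalizedModule p.asIdeal.primeCompl N),
      True := by
  set S := p.asIdeal.primeCompl
  have hex : Function.Exact f g := LinearMap.exact_iff.mpr hker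
  have hexp : Function.Exact (LocalizedModule.map S f) (LocalizedModule.map S g) :=
    LocalizedModule.map_exact S f g hex
  have hsp : Function.Surjective (LocalizedModule.map S g) :=
    LocalizedModule.map_surjective S g hsurj
  have hip : Function.Injective (LocalizedModule.map S f) :=
    LocalizedModule.map_injective S f hinj
  letI := hN
  obtain ⟨sec, hsec⟩ := Module.projective_lifting_property (LocalizedModule.map S g)
    LinearMap.id hsp
  obtain ⟨e, -, -⟩ := (Function.Exact.splitSurjectiveEquiv hexp hip) ⟨sec, hsec⟩
  exact ⟨e, trivial⟩

theorem aux_ext_free (f : L →ₗ[R] M) (g : M →ₗ[R] N)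
    (hinj : Function.Injective f) (hsurj : Function.Surjective g)
    (hker : LinearMap.ker g = LinearMap.range f)
    (hL : Module.Free (Localization.AtPrime p.asIdeal) (LocalizedModule p.asIdeal.primeCompl L))
    (hN : Module.Free (Localization.AtPrime p.asIdeal) (LocalizedModule p.asIdeal.primeCompl N)) :
    Module.Free (Localization.AtPrime p.asIdeal) (LocalizedModule p.asIdeal.primeCompl M) := by
  obtain ⟨e, -⟩ := aux_split p f g hinj hsurj hker hN
  letI := hL; letI := hN
  exact Module.Free.of_equiv e.symm

theorem aux_ker_free [Module.Finite R M] (f : L →ₗ[R] M) (g : M →ₗ[R] N)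
    (hinj : Function.Injective f) (hsurj : Function.Surjective g)
    (hker : LinearMap.ker g = LinearMap.range f)
    (hM : Module.Free (Localization.AtPrime p.asIdeal) (LocalizedModule p.asIdeal.primeCompl M))
    (hN : Module.Free (Localization.AtPrime p.asIdeal) (LocalizedModule p.asIdeal.primeCompl N)) :
    Module.Free (Localization.AtPrime p.asIdeal) (LocalizedModule p.asIdeal.primeCompl L) := by
  obtain ⟨e, -⟩ := aux_split p f g hinj hsurj hker hN
  have hfin : Module.Finite (Localization.AtPrime p.asIdeal)
      (LocalizedModule p.asIdeal.primeCompl M) :=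
    Module.Finite.of_isLocalizedModule p.asIdeal.primeCompl
      (LocalizedModule.mkLinearMap p.asIdeal.primeCompl M)
  have hproj : Module.Projective (Localization.AtPrime p.asIdeal)
      (LocalizedModule p.asIdeal.primeCompl M) := letI := hM; inferInstance
  refine aux_free_of_retract hfin hproj (e.symm.toLinearMap ∘ₗ LinearMap.inl _ _ _)
    (LinearMap.fst _ _ _ ∘ₗ e.toLinearMap) ?_
  ext x; simp

theorem aux_summand_free [Module.Finite R M] (i : N →ₗ[R] M) (r : M →ₗ[R] N)
    (h : r ∘ₗ i = LinearMap.id)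
    (hM : Module.Free (Localization.AtPrime p.asIdeal) (LocalizedModule p.asIdeal.primeCompl M)) :
    Module.Free (Localization.AtPrime p.asIdeal) (LocalizedModule p.asIdeal.primeCompl N) := by
  have hfin : Module.Finite (Localization.AtPrime p.asIdeal)
      (LocalizedModule p.asIdeal.primeCompl M) :=
    Module.Finite.of_isLocalizedModule p.asIdeal.primeCompl
      (LocalizedModule.mkLinearMap p.asIdeal.primeCompl M)
  have hproj : Module.Projective (Localization.AtPrime p.asIdeal)
      (LocalizedModule p.asIdeal.primeCompl M) := letI := hM; inferInstance
  refine aux_free_of_retract hfin hproj (LocalizedModule.map _ i) (LocalizedModule.map _ r) ?_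
  rw [← aux_locMap_comp, h, LocalizedModule.map_id]

end Prime

set_option maxHeartbeats 1000000 in
theorem aux_cosyzygy_free {R : Type} [CommRing R] [IsNoetherianRing R] (p : PrimeSpectrum R)
    {M P : Type} [AddCommGroup M] [Module R M] [AddCommGroup P] [Module R P]
    [Module.Finite R M] [Module.Finite R P] [Module.Projective R P]
    (f : M →ₗ[R] P)
    (happrox : ∀ g : M →ₗ[R] R, ∃ h : P →ₗ[R] R, h ∘ₗ f = g)
    (hM : Module.Free (Localization.AtPrime p.asIdeal) (LocalizedModule p.asIdeal.primeCompl M)) :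
    Module.Free (Localization.AtPrime p.asIdeal)
      (LocalizedModule p.asIdeal.primeCompl (P ⧸ LinearMap.range f)) := by
  have hfpM : Module.FinitePresentation R M := Module.finitePresentation_of_finite R M
  set S := p.asIdeal.primeCompl with hS
  let A := Localization.AtPrime p.asIdeal
  let fp : LocalizedModule S M →ₗ[A] LocalizedModule S P := LocalizedModule.map S f
  letI := hM
  have hfinM : Module.Finite A (LocalizedModule S M) :=
    Module.Finite.of_isLocalizedModule S (LocalizedModule.mkLinearMap S M)
  let ι := Module.Free.ChooseBasisIndex A (LocalizedModule S M)
  let b : Module.Basis ι A (LocalizedModule S M) := Module.Free.chooseBasis A (LocalizedModule S M)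
  have key : ∀ c : (LocalizedModule S M) →ₗ[A] A, ∃ (H : LocalizedModule S P →ₗ[A] A) (s : S),
      ∀ m, (s : R) • (c m) = H (fp m) := by
    intro c
    obtain ⟨⟨g, s⟩, hgs⟩ := IsLocalizedModule.surj S (auxL S M) c
    obtain ⟨h, hh⟩ := happrox g
    refine ⟨auxL S P h, s, fun m => ?_⟩
    have h1 : auxL S M (h ∘ₗ f) = (auxL S P h) ∘ₗ fp := aux_hom_comp S f h
    rw [hh, ← hgs, Submonoid.smul_def] at h1
    have h2 := LinearMap.congr_fun h1 m
    simpa using h2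
  choose H s hHs using fun i => key (b.coord i)
  let r : LocalizedModule S P →ₗ[A] LocalizedModule S M :=
    ∑ i, LinearMap.smulRight
      ((((IsLocalization.map_units A (s i)).unit⁻¹ : _) : A) • H i) (b i)
  have hr : ∀ m, r (fp m) = m := by
    intro m
    have step : ∀ i : ι, ((((IsLocalization.map_units A (s i)).unit⁻¹ : _) : A) • H i) (fp m)
        = b.coord i m := by
      intro i
      have h3 := (hHs i m).symm
      simp only [LinearMap.smul_apply, smul_eq_mul]
      rw [h3, Algebra.smul_def, ← mul_assoc]
      rw [IsUnit.val_inv_mul, one_mul]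
    simp only [r, LinearMap.sum_apply, LinearMap.smulRight_apply, step, Module.Basis.coord_apply]
    exact b.sum_repr m
  have hrl : r ∘ₗ fp = LinearMap.id := LinearMap.ext hr
  have hex : Function.Exact f (LinearMap.range f).mkQ :=
    LinearMap.exact_iff.mpr (Submodule.ker_mkQ _)
  have hexp : Function.Exact fp (LocalizedModule.map S (LinearMap.range f).mkQ) :=
    LocalizedModule.map_exact S f _ hex
  have hsurjp : Function.Surjective (LocalizedModule.map S (LinearMap.range f).mkQ) :=
    LocalizedModule.map_surjective S _ (Submodule.mkQ_surjective _)
  obtain ⟨e, -, -⟩ := (Function.Exact.splitInjectiveEquiv hexp hsurjp) ⟨r, hrl⟩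
  have hfinP : Module.Finite A (LocalizedModule S P) :=
    Module.Finite.of_isLocalizedModule S (LocalizedModule.mkLinearMap S P)
  have hprojP : Module.Projective A (LocalizedModule S P) :=
    Module.projective_of_isLocalizedModule S (LocalizedModule.mkLinearMap S P)
  refine aux_free_of_retract hfinP hprojP (e.symm.toLinearMap ∘ₗ LinearMap.inr _ _ _)
    (LinearMap.snd _ _ _ ∘ₗ e.toLinearMap) ?_
  ext x; simp

end NFAux

/-- `NF⁻¹(S)` is a resolving subcategory closed under transposes and
cosyzygies. -/
theorem aux_fgproj_free {R : Type} [CommRing R] (p : PrimeSpectrum R) (M : Type)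
    [AddCommGroup M] [Module R M] (h1 : Module.Finite R M) (h2 : Module.Projective R M) :
    Module.Free (Localization.AtPrime p.asIdeal) (LocalizedModule p.asIdeal.primeCompl M) := by
  letI := h1; letI := h2
  exact aux_free_of_fin_proj _ _
    (Module.Finite.of_isLocalizedModule p.asIdeal.primeCompl
      (LocalizedModule.mkLinearMap p.asIdeal.primeCompl M))
    (Module.projective_of_isLocalizedModule p.asIdeal.primeCompl
      (LocalizedModule.mkLinearMap p.asIdeal.primeCompl M))

theorem stmt14 (R : Type) [CommRing R] [IsNoetherianRing R]
    (S : Set (PrimeSpectrum R)) :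
    Resolving R (NFinv R S) ∧
    (∀ M, NFinv R S M → ∀ T, IsTranspose R T M → NFinv R S T) ∧
    (∀ M, NFinv R S M → ∀ N, IsCosyzygy R N M → NFinv R S N) := by
  constructor
  · constructor
    · exact fun M hM => hM.1
    · -- projectives
      intro M hM
      exact ⟨hM.1, fun p _ => aux_fgproj_free p M hM.1 hM.2⟩
    · -- summands
      intro M N N' hM ⟨e⟩
      have hr : (LinearMap.fst R ↥N ↥N' ∘ₗ e.toLinearMap) ∘ₗ
          (e.symm.toLinearMap ∘ₗ LinearMap.inl R ↥N ↥N') = LinearMap.id := by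
        ext x; simp
      haveI := hM.1
      have hNfin : Module.Finite R ↥N :=
        Module.Finite.of_surjective (LinearMap.fst R ↥N ↥N' ∘ₗ e.toLinearMap)
          (fun x => ⟨(e.symm.toLinearMap ∘ₗ LinearMap.inl R ↥N ↥N') x,
            by simpa using LinearMap.congr_fun hr x⟩)
      refine ⟨hNfin, fun p hp => ?_⟩
      exact aux_summand_free p (e.symm.toLinearMap ∘ₗ LinearMap.inl R ↥N ↥N')
        (LinearMap.fst R ↥N ↥N' ∘ₗ e.toLinearMap) hr (hM.2 p hp)
    · -- extensions
      intro L M N f g hses hL hN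
      obtain ⟨hinj, hsurj, hker⟩ := hses
      have hMfin : Module.Finite R ↥M := by
        constructor
        apply Submodule.fg_of_fg_map_of_fg_inf_ker g
        · rw [Submodule.map_top, LinearMap.range_eq_top.mpr hsurj]
          exact hN.1.fg_top
        · rw [top_inf_eq, hker, LinearMap.range_eq_map]
          exact hL.1.fg_top.map f
      refine ⟨hMfin, fun p hp => ?_⟩
      exact aux_ext_free p f g hinj hsurj hker (hL.2 p hp) (hN.2 p hp)
    · -- kernels of epimorphisms
      intro L M N f g hses hM hN
      obtain ⟨hinj, hsurj, hker⟩ := hses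
      haveI := hM.1
      haveI : IsNoetherian R ↥M := isNoetherian_of_isNoetherianRing_of_finite R ↥M
      have hrangefin : Module.Finite R ↥(LinearMap.range f) :=
        Module.Finite.iff_fg.mpr (IsNoetherian.noetherian _)
      have hLfin : Module.Finite R ↥L :=
        Module.Finite.equiv (LinearEquiv.ofInjective f hinj).symm
      refine ⟨hLfin, fun p hp => ?_⟩
      exact aux_ker_free p f g hinj hsurj hker (hM.2 p hp) (hN.2 p hp)
  constructor
  · -- transpose
    intro M hM T hT
    obtain ⟨P₁, P₀, d, pr, hP₁, hP₀, hsurj, hker, ⟨e⟩⟩ := hT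
    haveI := hP₁.1; haveI := hP₁.2; haveI := hP₀.1; haveI := hP₀.2
    have hdualfin : Module.Finite R (Module.Dual R ↥P₁) := inferInstance
    have hquotfin : Module.Finite R (Module.Dual R ↥P₁ ⧸ LinearMap.range d.dualMap) :=
      Module.Finite.of_surjective (LinearMap.range d.dualMap).mkQ
        (Submodule.mkQ_surjective _)
    have hTfin : Module.Finite R ↥T := Module.Finite.equiv e.symm
    refine ⟨hTfin, fun p hp => ?_⟩
    have hfree := aux_transpose_free p d pr hsurj hker (hM.2 p hp)
    exact aux_freeAt_congr p.asIdeal.primeCompl e.symm hfree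
  · -- cosyzygy
    intro M hM N hN
    obtain ⟨P, f, ⟨hP, happrox⟩, ⟨e⟩⟩ := hN
    haveI := hM.1
    haveI := hP.1; haveI := hP.2
    have hquotfin : Module.Finite R (↥P ⧸ LinearMap.range f) :=
      Module.Finite.of_surjective (LinearMap.range f).mkQ (Submodule.mkQ_surjective _)
    have hNfin : Module.Finite R ↥N := Module.Finite.equiv e.symm
    refine ⟨hNfin, fun p hp => ?_⟩
    have happrox' : ∀ g : ↥M →ₗ[R] R, ∃ h : ↥P →ₗ[R] R, h ∘ₗ f = g := by
      intro g
      obtain ⟨h, hh⟩ := happrox (ModuleCat.of R R)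
        ⟨Module.Finite.self R, (inferInstance : Module.Projective R R)⟩ g
      exact ⟨h, hh⟩
    have hfree := aux_cosyzygy_free p f happrox' (hM.2 p hp)
    exact aux_freeAt_congr p.asIdeal.primeCompl e.symm hfree
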